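/- The eigenvalue of the series a_{0,n}(u) on the fixed-point basis vector [d] equals ∏_{j≤0} (u - p_{0j} + ℏ')·(u - p_{0j})^{-1}, and hence the eigenvalue of Φ_n(u) := ∂_u log a_{0,n}(u) on [d] equals ∑_{j≤0} [ (u - p_{0j} + ℏ')^{-1} - (u - p_{0j})^{-1} ]; expanding in u^{-1}, the first three coefficients are Φ_{n,1} = -∑_{j=1}^n x_j - nℏ', Φ_{n,2} = ∑_{j=1}^n (x_j + ℏ')² - 2ℏℏ'∑_{j≤0} d_{0j}, and Φ_{n,3} = -∑_{j=1}^n (x_j+ℏ')³ + 3ℏℏ'(2∑_{j=1}^n x_j ∑_{k ≡ j mod n, k≤0} d_{0k} - ∑_{j≤0} d_{0j}² ℏ - ∑_{j≤0} d_{0j}(2⌊-j/n⌋ - 1)ℏ'). -/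

import Mathlib

open PowerSeries Finset

section Aux

variable {F : Type*} [Field F]

private lemma geom_inv (a : F) :
    (1 - C a * X)⁻¹ = PowerSeries.mk fun k => a ^ k := by
  have hc : constantCoeff (1 - C a * X) ≠ 0 := by simp
  symm
  rw [PowerSeries.eq_inv_iff_mul_eq_one hc]
  ext k
  rw [mul_sub, mul_one, map_sub]
  cases k with
  | zero => simp
  | succ k =>
    rw [show (PowerSeries.mk fun k => (a:F) ^ k) * (C a * X)
        = (C a * PowerSeries.mk fun k => (a:F) ^ k) * X by ring,
      PowerSeries.coeff_succ_mul_X]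
    simp [pow_succ, mul_comm, PowerSeries.coeff_one]

private lemma coeff_geom_mul (a b : F) (k : ℕ) :
    (PowerSeries.coeff k)
      ((PowerSeries.mk fun i => a ^ i) * PowerSeries.mk fun i => b ^ i)
      = ∑ i ∈ Finset.range (k + 1), a ^ i * b ^ (k - i) := by
  rw [PowerSeries.coeff_mul, Finset.Nat.sum_antidiagonal_eq_sum_range_succ_mk]
  simp

private lemma coeff_A (h' a b : F) (dd : ℕ) :
    PowerSeries.coeff (dd + 2)
      ((-h') • (X ^ 2 * ((1 - C a * X)⁻¹ * (1 - C b * X)⁻¹)))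
      = -h' * ∑ i ∈ Finset.range (dd + 1), a ^ i * b ^ (dd - i) := by
  rw [geom_inv, geom_inv, map_smul, smul_eq_mul, PowerSeries.coeff_X_pow_mul,
    coeff_geom_mul]

private lemma coeff_B (a : F) (dd : ℕ) :
    PowerSeries.coeff (dd + 1) (X * (1 - C a * X)⁻¹) = a ^ dd := by
  rw [geom_inv, PowerSeries.coeff_succ_X_mul, PowerSeries.coeff_mk]

private lemma tele (G : ℤ → F) (N : ℤ) (n : ℕ) (hn : 0 < n) (hN : N ≤ 0) :
    (∑ j ∈ Finset.Icc N 0, (G (j + n) - G j))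
      + ∑ j ∈ Finset.Icc (N - n) (N - 1), G (j + n)
      = ∑ m ∈ Finset.Icc (1 : ℤ) n, G m := by
  have hIoc : ∀ a b : ℤ, Finset.Icc a b = Finset.Ioc (a - 1) b := by
    intro a b; ext t; simp only [Finset.mem_Icc, Finset.mem_Ioc]; omega
  have hmap : ∀ a b : ℤ, ∑ j ∈ Finset.Icc a b, G (j + n)
      = ∑ j ∈ Finset.Icc (a + n) (b + n), G j := by
    intro a b
    rw [← map_add_right_Icc, Finset.sum_map]
    rfl
  have hu : ∀ a b c : ℤ, a ≤ b → b ≤ c →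
      (∑ j ∈ Finset.Ioc a b, G j) + ∑ j ∈ Finset.Ioc b c, G j
        = ∑ j ∈ Finset.Ioc a c, G j := by
    intro a b c h1 h2
    rw [← Finset.sum_union (by
      rw [Finset.disjoint_left]
      intro t ht ht'
      simp only [Finset.mem_Ioc] at ht ht'
      omega), Finset.Ioc_union_Ioc_eq_Ioc h1 h2]
  rw [Finset.sum_sub_distrib, hmap, hmap,
    show N - (n : ℤ) + n = N by ring, show N - 1 + (n : ℤ) = N + n - 1 by ring,
    show (0:ℤ) + (n:ℤ) = (n:ℤ) by ring,
    hIoc (N + (n:ℤ)) (n:ℤ), show N + (n:ℤ) - 1 = N + n - 1 by ring,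
    hIoc N 0, hIoc N (N + n - 1),
    hIoc 1 (n:ℤ), show (1:ℤ) - 1 = 0 by ring]
  have e1 := hu (N - 1) (N + n - 1) n (by omega) (by omega)
  have e2 := hu (N - 1) 0 n (by omega) (by omega)
  linear_combination e1 - e2

end Aux

open PowerSeries in
/-- The eigenvalue of `Φ_n(u) = ∂_u log a_{0,n}(u)` on the fixed point `[d]`
equals `∑_{j≤0} [(u - p_{0j} + ℏ')^{-1} - (u - p_{0j})^{-1}]`, which telescopes (with `N`
minimal such that `d_{0N} ≠ 0`) to the finite expression
`∑_{N≤j≤0} -ℏ'u^{-2}(1-(p_{0j}-ℏ')u^{-1})^{-1}(1-p_{0j}u^{-1})^{-1}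
 + ∑_{N-n≤j≤N-1} u^{-1}(1-(p_{0j}-ℏ')u^{-1})^{-1}`;
its first three coefficients, as a series `∑_{r≥1} Φ_{n,r} u^{-r-1}` in `u^{-1}`, are
`Φ_{n,1}, Φ_{n,2}, Φ_{n,3}` as stated. -/
theorem noncommutative_power_sum_coefficients
    {F : Type*} [Field F] [CharZero F]
    (n : ℕ) (hn : 0 < n) (hbar hbar' : F)
    (x : ℤ → F) (hx : ∀ j : ℤ, x (j + n) = x j)
    (N : ℤ) (hN : N ≤ 0) (d : ℤ → ℕ) (hdN : d N ≠ 0) (hd : ∀ j : ℤ, j < N → d j = 0)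
    (p : ℤ → F)
    (hp : ∀ j : ℤ, p j = -x j + (d j : F) * hbar + ((Int.fdiv (-j) (n:ℤ) : ℤ) : F) * hbar') :
    let Φ : PowerSeries F :=
      (∑ j ∈ Finset.Icc N 0,
        (-hbar') • (X ^ 2 * ((1 - C (p j - hbar') * X)⁻¹ * (1 - C (p j) * X)⁻¹)))
      + ∑ j ∈ Finset.Icc (N - n) (N - 1), X * (1 - C (p j - hbar') * X)⁻¹;
    (PowerSeries.coeff 2 Φ = -(∑ m ∈ Finset.Icc (1:ℤ) n, x m) - n * hbar')
    ∧ (PowerSeries.coeff 3 Φ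
        = ∑ m ∈ Finset.Icc (1:ℤ) n, (x m + hbar')^2
          - 2 * hbar * hbar' * ∑ j ∈ Finset.Icc N 0, (d j : F))
    ∧ (PowerSeries.coeff 4 Φ
        = -(∑ m ∈ Finset.Icc (1:ℤ) n, (x m + hbar')^3)
          + 3 * hbar * hbar' *
            (2 * ∑ m ∈ Finset.Icc (1:ℤ) n, x m *
                (∑ j ∈ (Finset.Icc N 0).filter (fun j => (j - m) % (n:ℤ) = 0), (d j : F))
              - (∑ j ∈ Finset.Icc N 0, (d j : F)^2) * hbar
              - (∑ j ∈ Finset.Icc N 0,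
                  (d j : F) * (2 * ((Int.fdiv (-j) (n:ℤ) : ℤ) : F) - 1)) * hbar')) := by
  intro Φ
  have hnz : (n : ℤ) ≠ 0 := by exact_mod_cast hn.ne'
  have hn0 : (0:ℤ) ≤ (n:ℤ) := by positivity
  -- the auxiliary function y
  set y : ℤ → F := fun j => -x j + ((Int.fdiv (-j) (n:ℤ) : ℤ) : F) * hbar' with hy_def
  -- fdiv shift
  have hfd : ∀ j : ℤ, Int.fdiv (-(j + (n:ℤ))) (n:ℤ) = Int.fdiv (-j) (n:ℤ) - 1 := by
    intro j
    rw [Int.fdiv_eq_ediv_of_nonneg _ hn0, Int.fdiv_eq_ediv_of_nonneg _ hn0,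
      show -(j + (n:ℤ)) = -j + (-1) * n by ring, Int.add_mul_ediv_right _ _ hnz]
    ring
  have hy : ∀ j : ℤ, y (j + n) = y j - hbar' := by
    intro j
    simp only [hy_def]
    rw [hx j, hfd j]
    push_cast
    ring
  have hpy : ∀ j : ℤ, p j = y j + (d j : F) * hbar := by
    intro j; rw [hp j]; simp only [hy_def]; ring
  have hB0 : ∀ j ∈ Finset.Icc (N - (n:ℤ)) (N - 1), p j = y j := by
    intro j hj
    rw [Finset.mem_Icc] at hj
    rw [hpy j, hd j (by omega)]
    simp
  have hym : ∀ m ∈ Finset.Icc (1:ℤ) (n:ℤ), y m = -(x m + hbar') := by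
    intro m hm
    rw [Finset.mem_Icc] at hm
    have hfm : Int.fdiv (-m) (n:ℤ) = -1 := by
      rw [Int.fdiv_eq_ediv_of_nonneg _ hn0, show -m = ((n:ℤ) - m) + (-1) * n by ring,
        Int.add_mul_ediv_right _ _ hnz,
        Int.ediv_eq_zero_of_lt (by omega) (by omega)]
      ring
    simp only [hy_def, hfm]
    push_cast
    ring
  -- iterated periodicity
  have hxmul : ∀ (k : ℤ) (j : ℤ), x (j + k * n) = x j := by
    have hnat : ∀ (k : ℕ) (j : ℤ), x (j + k * n) = x j := by
      intro k
      induction k with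
      | zero => simp
      | succ k ih =>
        intro j
        push_cast
        rw [show j + ((k:ℤ) + 1) * n = (j + k * n) + n by ring, hx, ih]
    intro k j
    rcases le_or_gt 0 k with hk | hk
    · have := hnat k.toNat j
      rwa [Int.toNat_of_nonneg hk] at this
    · have := hnat (-k).toNat (j + k * n)
      rw [Int.toNat_of_nonneg (by omega),
        show j + k * n + -k * n = j by ring] at this
      exact this.symm
  -- residue lemma
  have residue : ∑ m ∈ Finset.Icc (1:ℤ) (n:ℤ), x m *
        (∑ j ∈ (Finset.Icc N 0).filter (fun j => (j - m) % (n:ℤ) = 0), (d j : F))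
      = ∑ j ∈ Finset.Icc N 0, x j * (d j : F) := by
    have : ∀ m, x m * (∑ j ∈ (Finset.Icc N 0).filter
          (fun j => (j - m) % (n:ℤ) = 0), (d j : F))
        = ∑ j ∈ Finset.Icc N 0,
            (if (j - m) % (n:ℤ) = 0 then x m * (d j : F) else 0) := by
      intro m
      rw [Finset.mul_sum, Finset.sum_filter]
    simp only [this]
    rw [Finset.sum_comm]
    refine Finset.sum_congr rfl fun j _ => ?_
    set m₀ : ℤ := (j - 1) % n + 1 with hm₀
    have hediv := Int.mul_ediv_add_emod (j - 1) (n:ℤ)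
    have hnn := Int.emod_nonneg (j - 1) hnz
    have hlt := Int.emod_lt_of_pos (j - 1) (by omega : (0:ℤ) < n)
    have hm₀mem : m₀ ∈ Finset.Icc (1:ℤ) (n:ℤ) := by
      rw [Finset.mem_Icc]; omega
    have hcond : (j - m₀) % (n:ℤ) = 0 := by
      rw [show j - m₀ = (n:ℤ) * ((j - 1) / n) by rw [hm₀, Int.emod_def]; ring,
        Int.mul_emod_right]
    have hxm₀ : x m₀ = x j := by
      have hj' : j = m₀ + ((j - 1) / n) * n := by rw [hm₀, Int.emod_def]; ring
      have h5 := hxmul ((j - 1) / n) m₀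
      rw [← hj'] at h5
      exact h5.symm
    rw [Finset.sum_eq_single m₀]
    · rw [if_pos hcond, hxm₀]
    · intro b hb hbne
      rw [Finset.mem_Icc] at hb
      rw [if_neg]
      intro hcb
      have h1 : (n:ℤ) ∣ j - b := Int.dvd_of_emod_eq_zero hcb
      have h2 : (n:ℤ) ∣ j - m₀ := Int.dvd_of_emod_eq_zero hcond
      have h3 : (n:ℤ) ∣ m₀ - b := by
        have := dvd_sub h1 h2
        rwa [show j - b - (j - m₀) = m₀ - b by ring] at this
      have h4 : m₀ - b = 0 := by
        refine Int.eq_zero_of_dvd_of_natAbs_lt_natAbs h3 ?_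
        rw [Finset.mem_Icc] at hm₀mem
        omega
      omega
    · intro h; exact absurd hm₀mem h
  -- coefficient extraction
  have key : ∀ dd : ℕ, PowerSeries.coeff (dd + 2) Φ
      = (∑ j ∈ Finset.Icc N 0,
          -hbar' * ∑ i ∈ Finset.range (dd + 1), (p j - hbar') ^ i * (p j) ^ (dd - i))
        + ∑ j ∈ Finset.Icc (N - (n:ℤ)) (N - 1), (p j - hbar') ^ (dd + 1) := by
    intro dd
    show PowerSeries.coeff (dd + 2)
      ((∑ j ∈ Finset.Icc N 0,
        (-hbar') • (X ^ 2 * ((1 - C (p j - hbar') * X)⁻¹ * (1 - C (p j) * X)⁻¹)))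
      + ∑ j ∈ Finset.Icc (N - (n:ℤ)) (N - 1), X * (1 - C (p j - hbar') * X)⁻¹) = _
    rw [map_add, map_sum, map_sum]
    congr 1
    · exact Finset.sum_congr rfl fun j _ => coeff_A hbar' _ _ dd
    · exact Finset.sum_congr rfl fun j _ => coeff_B _ (dd + 1)
  have hcard : (Finset.Icc (1:ℤ) (n:ℤ)).card = n := by
    rw [Int.card_Icc]
    simp
  refine ⟨?_, ?_, ?_⟩
  -- first coefficient
  · have h2 := key 0
    rw [show (2:ℕ) = 0 + 2 from rfl, h2]
    have s1 : ∑ j ∈ Finset.Icc N 0,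
          -hbar' * ∑ i ∈ Finset.range (0 + 1), (p j - hbar') ^ i * (p j) ^ (0 - i)
        = ∑ j ∈ Finset.Icc N 0, (y (j + (n:ℤ)) ^ 1 - y j ^ 1) := by
      refine Finset.sum_congr rfl fun j _ => ?_
      simp only [Finset.sum_range_succ, Finset.sum_range_zero]
      rw [hy j]
      norm_num
    have s2 : ∑ j ∈ Finset.Icc (N - (n:ℤ)) (N - 1), (p j - hbar') ^ (0 + 1)
        = ∑ j ∈ Finset.Icc (N - (n:ℤ)) (N - 1), y (j + (n:ℤ)) ^ 1 := by
      refine Finset.sum_congr rfl fun j hj => ?_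
      rw [hB0 j hj, ← hy j]
    rw [s1, s2, tele (fun j => y j ^ 1) N n hn hN]
    rw [show ∑ m ∈ Finset.Icc (1:ℤ) (n:ℤ), y m ^ 1
        = ∑ m ∈ Finset.Icc (1:ℤ) (n:ℤ), (-(x m + hbar')) by
          exact Finset.sum_congr rfl fun m hm => by rw [pow_one, hym m hm]]
    rw [Finset.sum_neg_distrib, Finset.sum_add_distrib, Finset.sum_const, hcard,
      nsmul_eq_mul]
    ring
  -- second coefficient
  · have h3 := key 1
    rw [show (3:ℕ) = 1 + 2 from rfl, h3]
    have s1 : ∑ j ∈ Finset.Icc N 0,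
          -hbar' * ∑ i ∈ Finset.range (1 + 1), (p j - hbar') ^ i * (p j) ^ (1 - i)
        = ∑ j ∈ Finset.Icc N 0,
            ((y (j + (n:ℤ)) ^ 2 - y j ^ 2) + -(2 * hbar * hbar' * (d j : F))) := by
      refine Finset.sum_congr rfl fun j _ => ?_
      simp only [Finset.sum_range_succ, Finset.sum_range_zero]
      rw [hy j, hpy j]
      norm_num
      ring
    have s2 : ∑ j ∈ Finset.Icc (N - (n:ℤ)) (N - 1), (p j - hbar') ^ (1 + 1)
        = ∑ j ∈ Finset.Icc (N - (n:ℤ)) (N - 1), y (j + (n:ℤ)) ^ 2 := by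
      refine Finset.sum_congr rfl fun j hj => ?_
      rw [hB0 j hj, ← hy j]
    rw [s1, s2, Finset.sum_add_distrib, add_right_comm,
      tele (fun j => y j ^ 2) N n hn hN]
    rw [show ∑ m ∈ Finset.Icc (1:ℤ) (n:ℤ), y m ^ 2
        = ∑ m ∈ Finset.Icc (1:ℤ) (n:ℤ), (x m + hbar') ^ 2 by
          exact Finset.sum_congr rfl fun m hm => by rw [hym m hm, neg_pow]; norm_num]
    rw [Finset.sum_neg_distrib, ← Finset.mul_sum]
    ring
  -- third coefficient
  · have h4 := key 2
    rw [show (4:ℕ) = 2 + 2 from rfl, h4]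
    have s1 : ∑ j ∈ Finset.Icc N 0,
          -hbar' * ∑ i ∈ Finset.range (2 + 1), (p j - hbar') ^ i * (p j) ^ (2 - i)
        = ∑ j ∈ Finset.Icc N 0,
            ((y (j + (n:ℤ)) ^ 3 - y j ^ 3)
              + 3 * hbar * hbar' * (2 * (x j * (d j : F)) - (d j : F) ^ 2 * hbar
                  - (d j : F) * (2 * ((Int.fdiv (-j) (n:ℤ) : ℤ) : F) - 1) * hbar')) := by
      refine Finset.sum_congr rfl fun j _ => ?_
      simp only [Finset.sum_range_succ, Finset.sum_range_zero]
      rw [hy j, hpy j]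
      simp only [hy_def]
      norm_num
      ring
    have s2 : ∑ j ∈ Finset.Icc (N - (n:ℤ)) (N - 1), (p j - hbar') ^ (2 + 1)
        = ∑ j ∈ Finset.Icc (N - (n:ℤ)) (N - 1), y (j + (n:ℤ)) ^ 3 := by
      refine Finset.sum_congr rfl fun j hj => ?_
      rw [hB0 j hj, ← hy j]
    rw [s1, s2, Finset.sum_add_distrib, add_right_comm,
      tele (fun j => y j ^ 3) N n hn hN]
    rw [show ∑ m ∈ Finset.Icc (1:ℤ) (n:ℤ), y m ^ 3
        = ∑ m ∈ Finset.Icc (1:ℤ) (n:ℤ), -((x m + hbar') ^ 3) by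
          exact Finset.sum_congr rfl fun m hm => by
            rw [hym m hm, Odd.neg_pow ⟨1, by norm_num⟩]]
    rw [residue, Finset.sum_neg_distrib]
    rw [show ∑ j ∈ Finset.Icc N 0,
          3 * hbar * hbar' * (2 * (x j * (d j : F)) - (d j : F) ^ 2 * hbar
            - (d j : F) * (2 * ((Int.fdiv (-j) (n:ℤ) : ℤ) : F) - 1) * hbar')
        = 3 * hbar * hbar' *
            (2 * ∑ j ∈ Finset.Icc N 0, x j * (d j : F)
              - (∑ j ∈ Finset.Icc N 0, (d j : F) ^ 2) * hbar
              - (∑ j ∈ Finset.Icc N 0,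
                  (d j : F) * (2 * ((Int.fdiv (-j) (n:ℤ) : ℤ) : F) - 1)) * hbar') by
      simp only [Finset.mul_sum, Finset.sum_mul, ← Finset.sum_sub_distrib]]
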